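/- Continuous-time collision freedom from inflated discrete constraints: suppose p : ℝ → ℝⁿ is C² with ‖p''(t)‖ ≤ ā everywhere and ‖p'(t_k)‖ ≤ v̄, and suppose the discrete free-ball constraint holds with inflated margin: ‖p(t_k) − c_k‖ ≤ d_O(c_k) − d̲ − v̄·(Δt/2) − ā·(Δt²/8). Then for every t with |t − t_k| ≤ Δt/2 and every obstacle point o ∈ O, ‖p(t) − o‖ ≥ d̲. -/

import Mathlib

open intervalIntegral MeasureTheory

lemma key_displacement {n : ℕ} (p : ℝ → EuclideanSpace ℝ (Fin n)) (hp : ContDiff ℝ 2 p)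
    (abar vbar tk : ℝ)
    (ha : ∀ t : ℝ, ‖iteratedDeriv 2 p t‖ ≤ abar)
    (hv : ‖deriv p tk‖ ≤ vbar) (t : ℝ) :
    ‖p t - p tk‖ ≤ vbar * |t - tk| + abar / 2 * (t - tk) ^ 2 := by
  have habar : 0 ≤ abar := le_trans (norm_nonneg _) (ha 0)
  have hvbar : 0 ≤ vbar := le_trans (norm_nonneg _) hv
  have hd1 : Differentiable ℝ p := hp.differentiable two_ne_zero
  have hdp : ContDiff ℝ 1 (deriv p) := (contDiff_succ_iff_deriv (n := 1)).mp (by exact_mod_cast hp) |>.2.2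
  have hd2 : Differentiable ℝ (deriv p) := hdp.differentiable one_ne_zero
  have hlip : ∀ s : ℝ, ‖deriv p s - deriv p tk‖ ≤ abar * |s - tk| := by
    intro s
    have := convex_univ.norm_image_sub_le_of_norm_deriv_le
      (f := deriv p) (C := abar) (fun x _ => hd2 x)
      (fun x _ => by simpa [iteratedDeriv_succ, iteratedDeriv_one] using ha x)
      (Set.mem_univ tk) (Set.mem_univ s)
    simpa [Real.norm_eq_abs] using this
  have hbound : ∀ s : ℝ, ‖deriv p s‖ ≤ vbar + abar * |s - tk| := by
    intro s
    calc ‖deriv p s‖ ≤ ‖deriv p tk‖ + ‖deriv p s - deriv p tk‖ := by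
          simpa using norm_add_le (deriv p tk) (deriv p s - deriv p tk)
      _ ≤ vbar + abar * |s - tk| := add_le_add hv (hlip s)
  have hftc : (∫ s in tk..t, deriv p s) = p t - p tk :=
    intervalIntegral.integral_deriv_eq_sub (fun x _ => hd1 x)
      (hdp.continuous.intervalIntegrable tk t)
  have hg2 : IntervalIntegrable (fun s => abar * |s - tk|) volume tk t := by
    apply Continuous.intervalIntegrable; fun_prop
  have hgint : IntervalIntegrable (fun s => vbar + abar * |s - tk|) volume tk t := by
    apply Continuous.intervalIntegrable; fun_prop
  have hnorm : ‖p t - p tk‖ ≤ |∫ s in tk..t, (vbar + abar * |s - tk|)| := by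
    rw [← hftc]
    exact intervalIntegral.norm_integral_le_abs_of_norm_le
      (Filter.Eventually.of_forall fun s => hbound s) hgint
  have hcomp : (∫ s in tk..t, |s - tk|) = ∫ u in (0:ℝ)..(t - tk), |u| := by
    simpa using intervalIntegral.integral_comp_sub_right (fun u => |u|) tk
  set h := t - tk with hh
  have hsplit : (∫ s in tk..t, (vbar + abar * |s - tk|))
      = vbar * h + abar * ∫ u in (0:ℝ)..h, |u| := by
    rw [intervalIntegral.integral_add intervalIntegrable_const hg2,
      intervalIntegral.integral_const, intervalIntegral.integral_const_mul, hcomp]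
    simp [smul_eq_mul, mul_comm]
    exact Or.inl hh.symm
  rcases le_or_gt 0 h with hpos | hneg
  · have habs : (∫ u in (0:ℝ)..h, |u|) = h ^ 2 / 2 := by
      rw [intervalIntegral.integral_congr (g := fun u => u)
        (fun u hu => by
          rw [Set.uIcc_of_le hpos] at hu
          exact abs_of_nonneg hu.1)]
      simp [integral_id]
    rw [hsplit, habs] at hnorm
    have : |vbar * h + abar * (h ^ 2 / 2)| = vbar * h + abar * (h ^ 2 / 2) := by
      apply abs_of_nonneg; positivity
    rw [this] at hnorm
    rw [abs_of_nonneg hpos]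
    nlinarith
  · have habs : (∫ u in (0:ℝ)..h, |u|) = -(h ^ 2 / 2) := by
      rw [intervalIntegral.integral_congr (g := fun u => -u)
        (fun u hu => by
          rw [Set.uIcc_of_ge hneg.le] at hu
          exact abs_of_nonpos hu.2)]
      rw [intervalIntegral.integral_neg, integral_id]
      ring
    rw [hsplit, habs] at hnorm
    have hle : |vbar * h + abar * -(h ^ 2 / 2)| ≤ vbar * |h| + abar / 2 * h ^ 2 := by
      rw [abs_of_neg hneg]
      rw [abs_le]
      constructor <;> nlinarith
    exact hnorm.trans hle

/-- Continuous-time collision freedom from inflated discrete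
constraints: if `p` is C² with `‖p''‖ ≤ ā`, `‖p'(t_k)‖ ≤ v̄`, and
`‖p(t_k) − c_k‖ ≤ d_O(c_k) − d̲ − v̄ Δt/2 − ā Δt²/8`, then for every `t` with
`|t − t_k| ≤ Δt/2` and every `o ∈ O`, `‖p(t) − o‖ ≥ d̲`. -/
theorem continuous_time_collision_freedom {n : ℕ}
    (O : Set (EuclideanSpace ℝ (Fin n))) (hO : O.Nonempty)
    (dmin : ℝ) (hdmin : 0 < dmin)
    (p : ℝ → EuclideanSpace ℝ (Fin n))
    (hp : ContDiff ℝ 2 p)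
    (abar vbar tk Δt : ℝ) (hΔt : 0 < Δt)
    (ha : ∀ t : ℝ, ‖iteratedDeriv 2 p t‖ ≤ abar)
    (hv : ‖deriv p tk‖ ≤ vbar)
    (ck : EuclideanSpace ℝ (Fin n))
    (hball : ‖p tk - ck‖ ≤
      Metric.infDist ck O - dmin - vbar * (Δt / 2) - abar * (Δt ^ 2 / 8)) :
    ∀ t : ℝ, |t - tk| ≤ Δt / 2 → ∀ o ∈ O, dmin ≤ ‖p t - o‖ := by
  intro t ht o ho
  have habar : 0 ≤ abar := le_trans (norm_nonneg _) (ha 0)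
  have hvbar : 0 ≤ vbar := le_trans (norm_nonneg _) hv
  have hdisp := key_displacement p hp abar vbar tk ha hv t
  have hinf : Metric.infDist ck O ≤ ‖ck - o‖ := by
    simpa [dist_eq_norm] using Metric.infDist_le_dist_of_mem ho
  have htri : ‖ck - o‖ ≤ ‖p t - o‖ + ‖p tk - ck‖ + ‖p t - p tk‖ := by
    have : ck - o = (p t - o) - (p tk - ck) - (p t - p tk) := by abel
    rw [this]
    calc ‖(p t - o) - (p tk - ck) - (p t - p tk)‖
        ≤ ‖(p t - o) - (p tk - ck)‖ + ‖p t - p tk‖ := norm_sub_le _ _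
      _ ≤ ‖p t - o‖ + ‖p tk - ck‖ + ‖p t - p tk‖ := by
          have := norm_sub_le (p t - o) (p tk - ck)
          linarith
  have h1 : vbar * |t - tk| ≤ vbar * (Δt / 2) :=
    mul_le_mul_of_nonneg_left ht hvbar
  have h2 : (t - tk) ^ 2 ≤ (Δt / 2) ^ 2 := by
    rw [← sq_abs (t - tk)]
    exact pow_le_pow_left₀ (abs_nonneg _) ht 2
  nlinarith [norm_nonneg (p t - p tk)]
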